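/- Let m = 2n with n ≥ 2, let F = F_1·F_2·⋯·F_m with F_s ∈ {L_s^+, L_s^-, M_s^+, M_s^-} for each 1 ≤ s ≤ m, and let 1 ≤ a < b ≤ n. Then V_{2a-1,2b-1}·F·e_{2a-1}^⊥·e_{2b-1}^⊥ = (-1)^{|F_{2a-1}|+|F_{2b-1}|+‖F_{2a-1}‖+‖F_{2b-1}‖+1}·F^{2a,2b-1} and V_{2a,2b}·F·e_{2a}^⊥·e_{2b}^⊥ = (-1)^{|F_{2a}|+|F_{2b}|+‖F_{2a}‖+‖F_{2b}‖}·F^{2a,2b-1}. -/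

import Mathlib

noncomputable section

/-- The bilinear map `B((a,b),(c,d)) = ∑ⱼ aⱼ dⱼ` on `ℂ^m × ℂ^m`. -/
def splitBilin (m : ℕ) :
    ((Fin m → ℂ) × (Fin m → ℂ)) →ₗ[ℂ] ((Fin m → ℂ) × (Fin m → ℂ)) →ₗ[ℂ] ℂ :=
  LinearMap.mk₂ ℂ (fun v w => ∑ j, v.1 j * w.2 j)
    (fun v v' w => by simp [add_mul, Finset.sum_add_distrib])
    (fun c v w => by
      simp only [LinearMap.smul_apply, Prod.smul_fst, Pi.smul_apply, smul_eq_mul,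
        Finset.mul_sum]
      exact Finset.sum_congr rfl fun i _ => by ring)
    (fun v w w' => by simp [mul_add, Finset.sum_add_distrib])
    (fun c v w => by
      simp only [Prod.smul_snd, Pi.smul_apply, smul_eq_mul, Finset.mul_sum]
      exact Finset.sum_congr rfl fun i _ => by ring)

/-- The quadratic form `Q(a, b) = ∑ⱼ aⱼ bⱼ` on `ℂ^m × ℂ^m` (the span of the
`f_j^+` and the `f_j^-`). -/
def splitQ (m : ℕ) : QuadraticForm ℂ ((Fin m → ℂ) × (Fin m → ℂ)) :=
  LinearMap.BilinMap.toQuadraticMap (splitBilin m)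

/-- The forward basis element `e_j^+` (1-based index `j`). -/
def eP (m : ℕ) (j : ℕ) : CliffordAlgebra (splitQ m) :=
  CliffordAlgebra.ι (splitQ m) ((fun i => if (i : ℕ) + 1 = j then 1 else 0), 0)

/-- The backward basis element `e_j^-` (1-based index `j`). -/
def eM (m : ℕ) (j : ℕ) : CliffordAlgebra (splitQ m) :=
  CliffordAlgebra.ι (splitQ m) (0, (fun i => if (i : ℕ) + 1 = j then 1 else 0))

/-- `e_j = e_j^+ + e_j^-`. -/
def ee (m : ℕ) (j : ℕ) : CliffordAlgebra (splitQ m) := eP m j + eM m j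

/-- `e_j^⊥ = e_j^+ - e_j^-`. -/
def eperp (m : ℕ) (j : ℕ) : CliffordAlgebra (splitQ m) := eP m j - eM m j

/-- The constant `i` for odd (1-based) indices and `1` for even indices. -/
def oddI (s : ℕ) : ℂ := if s % 2 = 1 then Complex.I else 1

/-- `L_s^+`, i.e. `e_s^+ e_s^- + i e_s^+` for odd `s` and `e_s^+ e_s^- + e_s^+` for even `s`. -/
def idemLp (m : ℕ) (s : ℕ) : CliffordAlgebra (splitQ m) := eP m s * eM m s + oddI s • eP m s

/-- `L_s^-`. -/
def idemLm (m : ℕ) (s : ℕ) : CliffordAlgebra (splitQ m) := eP m s * eM m s - oddI s • eP m s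

/-- `M_s^+`, i.e. `e_s^- e_s^+ + i e_s^-` for odd `s` and `e_s^- e_s^+ + e_s^-` for even `s`. -/
def idemMp (m : ℕ) (s : ℕ) : CliffordAlgebra (splitQ m) := eM m s * eP m s + oddI s • eM m s

/-- `M_s^-`. -/
def idemMm (m : ℕ) (s : ℕ) : CliffordAlgebra (splitQ m) := eM m s * eP m s - oddI s • eM m s

/-- A generic choice `F_s ∈ {L_s^+, L_s^-, M_s^+, M_s^-}`, encoded by
`‖F_s‖ : Bool` (`true` for the `M`'s) and `|F_s| : Bool`
(`true` for `L_s^-` and `M_s^+`). -/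
def idemF (m : ℕ) (s : ℕ) : Bool → Bool → CliffordAlgebra (splitQ m)
  | false, false => idemLp m s
  | false, true => idemLm m s
  | true, false => idemMm m s
  | true, true => idemMp m s

/-- Numerical value of `|F_s|` or `‖F_s‖`. -/
def bval (b : Bool) : ℕ := if b then 1 else 0

/-- The four-vector `V_{a,b} = -e_a^⊥ e_a e_b^⊥ e_b`. -/
def VV (m : ℕ) (a b : ℕ) : CliffordAlgebra (splitQ m) :=
  -(eperp m a * ee m a * eperp m b * ee m b)

/-- The ordered product `F = F_1 F_2 ⋯ F_m`, the factor `F_s` being encoded by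
`(nrm s, sg s) = (‖F_s‖, |F_s|)`. -/
def prodF (m : ℕ) (nrm sg : ℕ → Bool) : CliffordAlgebra (splitQ m) :=
  ((List.range m).map fun s => idemF m (s + 1) (nrm (s + 1)) (sg (s + 1))).prod

open CliffordAlgebra in
lemma polar_split (m : ℕ) (v w : (Fin m → ℂ) × (Fin m → ℂ)) :
    QuadraticMap.polar (splitQ m) v w = ∑ j, v.1 j * w.2 j + ∑ j, w.1 j * v.2 j := by
  rw [splitQ, LinearMap.BilinMap.polar_toQuadraticMap]
  rfl

lemma sum_ind_ne {m j l : ℕ} (h : j ≠ l) :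
    ∑ i : Fin m, (if (i:ℕ)+1 = j then (1:ℂ) else 0) * (if (i:ℕ)+1 = l then 1 else 0) = 0 :=
  Finset.sum_eq_zero fun i _ => by
    split_ifs with h1 h2
    · omega
    · simp
    · simp
    · simp

lemma sum_ind_eq {m j : ℕ} (h1 : 1 ≤ j) (h2 : j ≤ m) :
    ∑ i : Fin m, (if (i:ℕ)+1 = j then (1:ℂ) else 0) * (if (i:ℕ)+1 = j then 1 else 0) = 1 := by
  have : ∀ i : Fin m, (if (i:ℕ)+1 = j then (1:ℂ) else 0) * (if (i:ℕ)+1 = j then 1 else 0)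
      = if i = (⟨j-1, by omega⟩ : Fin m) then 1 else 0 := by
    intro i
    have : ((i:ℕ)+1 = j) ↔ (i = (⟨j-1, by omega⟩ : Fin m)) := by
      rw [Fin.ext_iff]; simp; omega
    split_ifs with ha hb <;> simp_all
  rw [Finset.sum_congr rfl fun i _ => this i, Finset.sum_ite_eq' Finset.univ _ (fun _ => (1:ℂ))]
  simp

open CliffordAlgebra in
lemma eP_mul_eP_add (m j l : ℕ) : eP m j * eP m l + eP m l * eP m j = 0 := by
  rw [eP, eP, ι_mul_ι_add_swap, polar_split]; simp

open CliffordAlgebra in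
lemma eM_mul_eM_add (m j l : ℕ) : eM m j * eM m l + eM m l * eM m j = 0 := by
  rw [eM, eM, ι_mul_ι_add_swap, polar_split]; simp

open CliffordAlgebra in
lemma eP_mul_eM_add_ne (m : ℕ) {j l : ℕ} (h : j ≠ l) :
    eP m j * eM m l + eM m l * eP m j = 0 := by
  rw [eP, eM, ι_mul_ι_add_swap, polar_split]
  simp only [Pi.zero_apply, mul_zero, zero_mul, Finset.sum_const_zero, add_zero,
    sum_ind_ne h, map_zero]

open CliffordAlgebra in
lemma eP_mul_eM_add_eq (m : ℕ) {j : ℕ} (h1 : 1 ≤ j) (h2 : j ≤ m) :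
    eP m j * eM m j + eM m j * eP m j = 1 := by
  rw [eP, eM, ι_mul_ι_add_swap, polar_split]
  simp only [Pi.zero_apply, mul_zero, zero_mul, Finset.sum_const_zero, add_zero,
    sum_ind_eq h1 h2, map_one]

open CliffordAlgebra in
lemma splitQ_apply (m : ℕ) (v : (Fin m → ℂ) × (Fin m → ℂ)) :
    splitQ m v = ∑ j, v.1 j * v.2 j := rfl

open CliffordAlgebra in
lemma eP_sq (m j : ℕ) : eP m j * eP m j = 0 := by
  rw [eP, ι_sq_scalar, splitQ_apply]; simp

open CliffordAlgebra in
lemma eM_sq (m j : ℕ) : eM m j * eM m j = 0 := by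
  rw [eM, ι_sq_scalar, splitQ_apply]; simp

lemma eP_sq' (m j : ℕ) (x : CliffordAlgebra (splitQ m)) : eP m j * (eP m j * x) = 0 := by
  rw [← mul_assoc, eP_sq, zero_mul]

lemma eM_sq' (m j : ℕ) (x : CliffordAlgebra (splitQ m)) : eM m j * (eM m j * x) = 0 := by
  rw [← mul_assoc, eM_sq, zero_mul]

lemma eM_eP (m : ℕ) {j : ℕ} (h1 : 1 ≤ j) (h2 : j ≤ m) :
    eM m j * eP m j = 1 - eP m j * eM m j :=
  eq_sub_of_add_eq (by rw [add_comm]; exact eP_mul_eM_add_eq m h1 h2)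

lemma eM_eP' (m : ℕ) {j : ℕ} (h1 : 1 ≤ j) (h2 : j ≤ m) (x : CliffordAlgebra (splitQ m)) :
    eM m j * (eP m j * x) = x - eP m j * (eM m j * x) := by
  rw [← mul_assoc, eM_eP m h1 h2, sub_mul, one_mul, mul_assoc]

-- generator swap lemmas
lemma swapPP (m t s : ℕ) : eP m t * eP m s = -(eP m s * eP m t) :=
  eq_neg_of_add_eq_zero_left (eP_mul_eP_add m t s)

lemma swapMM (m t s : ℕ) : eM m t * eM m s = -(eM m s * eM m t) :=
  eq_neg_of_add_eq_zero_left (eM_mul_eM_add m t s)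

lemma swapPM (m : ℕ) {t s : ℕ} (h : t ≠ s) : eP m t * eM m s = -(eM m s * eP m t) :=
  eq_neg_of_add_eq_zero_left (eP_mul_eM_add_ne m h)

lemma swapMP (m : ℕ) {t s : ℕ} (h : t ≠ s) : eM m t * eP m s = -(eP m s * eM m t) :=
  eq_neg_of_add_eq_zero_right (eP_mul_eM_add_ne m h.symm)

-- generic helpers
section generic
variable {A : Type*} [Ring A]

lemma sub_swap {x y z : A} (h1 : x*z = -(z*x)) (h2 : y*z = -(z*y)) :
    (x - y) * z = -(z * (x - y)) := by
  rw [sub_mul, h1, h2, mul_sub]; abel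

lemma add_swap {x y z : A} (h1 : x*z = -(z*x)) (h2 : y*z = -(z*y)) :
    (x + y) * z = -(z * (x + y)) := by
  rw [add_mul, h1, h2, mul_add]; abel

lemma anti_anti_commute {x y z : A} (h1 : x*z = -(z*x)) (h2 : y*z = -(z*y)) :
    Commute (x*y) z := by
  show x*y*z = z*(x*y)
  rw [mul_assoc, h2, mul_neg, ← mul_assoc, h1, neg_mul, neg_neg, mul_assoc]

lemma swap_symm {x z : A} (h : x*z = -(z*x)) : z*x = -(x*z) := by rw [h, neg_neg]
end generic

lemma eperp_eP_swap (m : ℕ) {t s : ℕ} (h : t ≠ s) :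
    eperp m t * eP m s = -(eP m s * eperp m t) :=
  sub_swap (swapPP m t s) (swapMP m h)

lemma eperp_eM_swap (m : ℕ) {t s : ℕ} (h : t ≠ s) :
    eperp m t * eM m s = -(eM m s * eperp m t) :=
  sub_swap (swapPM m h) (swapMM m t s)

lemma ee_eP_swap (m : ℕ) {t s : ℕ} (h : t ≠ s) :
    ee m t * eP m s = -(eP m s * ee m t) :=
  add_swap (swapPP m t s) (swapMP m h)

lemma ee_eM_swap (m : ℕ) {t s : ℕ} (h : t ≠ s) :
    ee m t * eM m s = -(eM m s * ee m t) :=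
  add_swap (swapPM m h) (swapMM m t s)

/-- `D_s = e_s^⊥ e_s`. -/
def DD (m s : ℕ) : CliffordAlgebra (splitQ m) := eperp m s * ee m s

lemma DD_commute_eP (m : ℕ) {s t : ℕ} (h : s ≠ t) : Commute (DD m s) (eP m t) :=
  anti_anti_commute (eperp_eP_swap m h) (ee_eP_swap m h)

lemma DD_commute_eM (m : ℕ) {s t : ℕ} (h : s ≠ t) : Commute (DD m s) (eM m t) :=
  anti_anti_commute (eperp_eM_swap m h) (ee_eM_swap m h)

lemma DD_commute_idemF (m : ℕ) {s t : ℕ} (h : s ≠ t) (b c : Bool) :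
    Commute (DD m s) (idemF m t b c) := by
  have hp := DD_commute_eP m h
  have hm := DD_commute_eM m h
  rcases b <;> rcases c <;>
    simp only [idemF, idemLp, idemLm, idemMp, idemMm] <;>
    first
      | exact (hp.mul_right hm).add_right (hp.smul_right _)
      | exact (hp.mul_right hm).sub_right (hp.smul_right _)
      | exact (hm.mul_right hp).add_right (hm.smul_right _)
      | exact (hm.mul_right hp).sub_right (hm.smul_right _)

lemma eperp_quadPM_swap (m : ℕ) {t s : ℕ} (h : t ≠ s) :
    eperp m t * (eP m s * eM m s) = (eP m s * eM m s) * eperp m t := by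
  rw [← mul_assoc, eperp_eP_swap m h, neg_mul, mul_assoc, eperp_eM_swap m h,
    mul_neg, neg_neg, ← mul_assoc]

lemma eperp_quadMP_swap (m : ℕ) {t s : ℕ} (h : t ≠ s) :
    eperp m t * (eM m s * eP m s) = (eM m s * eP m s) * eperp m t := by
  rw [← mul_assoc, eperp_eM_swap m h, neg_mul, mul_assoc, eperp_eP_swap m h,
    mul_neg, neg_neg, ← mul_assoc]

lemma eperp_idemF_swap (m : ℕ) {t s : ℕ} (h : t ≠ s) (b c : Bool) :
    eperp m t * idemF m s b c = idemF m s b (!c) * eperp m t := by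
  rcases b <;> rcases c <;>
    simp only [idemF, idemLp, idemLm, idemMp, idemMm, Bool.not_true, Bool.not_false,
      mul_add, add_mul, mul_sub, sub_mul, mul_smul_comm, smul_mul_assoc,
      eperp_quadPM_swap m h, eperp_quadMP_swap m h,
      eperp_eP_swap m h, eperp_eM_swap m h, smul_neg] <;>
    abel

lemma DD_idemF (m : ℕ) {s : ℕ} (h1 : 1 ≤ s) (h2 : s ≤ m) (b c : Bool) :
    DD m s * idemF m s b c = (if b then (-1:ℂ) else 1) • idemF m s b c := by
  rcases b <;> rcases c <;>
    simp only [DD, eperp, ee, idemF, idemLp, idemLm, idemMp, idemMm, if_true, if_false,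
      Bool.false_eq_true, ite_false, ite_true,
      mul_add, add_mul, mul_sub, sub_mul, mul_smul_comm, smul_mul_assoc, mul_assoc,
      eP_sq, eP_sq', eM_sq, eM_sq', eM_eP m h1 h2, eM_eP' m h1 h2,
      mul_zero, zero_mul, mul_one, one_mul, smul_zero, zero_add, add_zero,
      mul_sub, sub_mul, smul_sub, smul_neg, neg_smul, one_smul, neg_one_smul] <;>
    module

lemma absorb_odd (m : ℕ) {s : ℕ} (hodd : s % 2 = 1) (h1 : 1 ≤ s) (h2 : s ≤ m) (b c : Bool) :
    idemF m s b c * eperp m s = ((-1:ℂ)^(bval c + 1) * Complex.I) • idemF m s b c := by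
  rcases b <;> rcases c <;>
    simp only [idemF, idemLp, idemLm, idemMp, idemMm, eperp, bval, oddI, hodd, if_true,
      ite_true, ite_false, Bool.false_eq_true,
      mul_add, add_mul, mul_sub, sub_mul, mul_smul_comm, smul_mul_assoc, mul_assoc,
      eP_sq, eP_sq', eM_sq, eM_sq', eM_eP m h1 h2, eM_eP' m h1 h2,
      mul_zero, zero_mul, mul_one, one_mul, smul_zero, zero_add, add_zero, sub_zero,
      smul_sub, smul_neg, neg_smul, one_smul] <;>
    match_scalars <;>
    norm_num [Complex.I_mul_I]

lemma absorb_even (m : ℕ) {s : ℕ} (heven : s % 2 = 0) (h1 : 1 ≤ s) (h2 : s ≤ m) (b c : Bool) :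
    idemF m s b c * eperp m s = ((-1:ℂ)^(bval c + 1)) • idemF m s b (!c) := by
  rcases b <;> rcases c <;>
    simp only [idemF, idemLp, idemLm, idemMp, idemMm, eperp, bval, oddI, heven, if_true,
      ite_true, ite_false, Bool.false_eq_true, Bool.not_true, Bool.not_false,
      Nat.zero_ne_one, one_ne_zero,
      mul_add, add_mul, mul_sub, sub_mul, mul_smul_comm, smul_mul_assoc, mul_assoc,
      eP_sq, eP_sq', eM_sq, eM_sq', eM_eP m h1 h2, eM_eP' m h1 h2,
      mul_zero, zero_mul, mul_one, one_mul, smul_zero, zero_add, add_zero, sub_zero,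
      smul_sub, smul_neg, neg_smul, one_smul] <;>
    match_scalars <;>
    norm_num

section listmach
variable {Mo : Type*} [Monoid Mo]

lemma list_prod_swap {X : Mo} {f g : ℕ → Mo} :
    ∀ l : List ℕ, (∀ s ∈ l, f s * X = X * g s) → (l.map f).prod * X = X * (l.map g).prod
  | [], _ => by simp
  | a :: l, h => by
    simp only [List.map_cons, List.prod_cons, mul_assoc]
    rw [list_prod_swap l (fun s hs => h s (List.mem_cons_of_mem a hs)), ← mul_assoc,
      h a (List.mem_cons_self (a := a) (l := l)), mul_assoc]

lemma commute_list_prod {X : Mo} {f : ℕ → Mo} (l : List ℕ) (h : ∀ s ∈ l, Commute X (f s)) :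
    Commute X (l.map f).prod :=
  Commute.list_prod_right _ _ fun y hy => by
    obtain ⟨s, hs, rfl⟩ := List.mem_map.1 hy; exact h s hs

lemma map_prod_congr {f g : ℕ → Mo} (l : List ℕ) (h : ∀ s ∈ l, f s = g s) :
    (l.map f).prod = (l.map g).prod := by
  rw [List.map_congr_left h]
end listmach

lemma range_split1 {p m : ℕ} (h1 : 1 ≤ p) (h2 : p ≤ m) :
    List.range m = (List.range (p-1) ++ [p-1]) ++ (List.range (m-p)).map (p + ·) := by
  obtain ⟨p', rfl⟩ : ∃ p', p = p' + 1 := ⟨p-1, by omega⟩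
  have hm : m = (p' + 1) + (m - (p'+1)) := by omega
  rw [hm, List.range_add, List.range_succ]
  simp

/-- The `s`-th factor of `prodF` (0-based `s`). -/
def fF (m : ℕ) (nrm sg : ℕ → Bool) (s : ℕ) : CliffordAlgebra (splitQ m) :=
  idemF m (s+1) (nrm (s+1)) (sg (s+1))

lemma prodF_eq (m : ℕ) (nrm sg : ℕ → Bool) :
    prodF m nrm sg = ((List.range m).map (fF m nrm sg)).prod := rfl

lemma prodF_split (m : ℕ) (nrm sg : ℕ → Bool) {p : ℕ} (h1 : 1 ≤ p) (h2 : p ≤ m) :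
    prodF m nrm sg =
      ((List.range (p-1)).map (fF m nrm sg)).prod * idemF m p (nrm p) (sg p) *
        (((List.range (m-p)).map (p + ·)).map (fF m nrm sg)).prod := by
  have hp : p - 1 + 1 = p := by omega
  rw [prodF_eq, range_split1 h1 h2]
  simp [fF, hp, mul_assoc]

lemma DD_mul_prodF (m : ℕ) (nrm sg : ℕ → Bool) {p : ℕ} (h1 : 1 ≤ p) (h2 : p ≤ m) :
    DD m p * prodF m nrm sg = (if nrm p then (-1:ℂ) else 1) • prodF m nrm sg := by
  rw [prodF_split m nrm sg h1 h2]
  have hA : Commute (DD m p) (((List.range (p-1)).map (fF m nrm sg)).prod) :=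
    commute_list_prod _ fun s hs => by
      have : s + 1 ≠ p := by have := List.mem_range.1 hs; omega
      exact DD_commute_idemF m (fun h => this h.symm) _ _
  rw [mul_assoc, ← mul_assoc (DD m p), hA.eq, mul_assoc, ← mul_assoc (DD m p),
    DD_idemF m h1 h2, smul_mul_assoc, mul_smul_comm]

lemma VV_mul_prodF (m : ℕ) (nrm sg : ℕ → Bool) {p q : ℕ} (hp1 : 1 ≤ p) (hpm : p ≤ m)
    (hq1 : 1 ≤ q) (hqm : q ≤ m) :
    VV m p q * prodF m nrm sg =
      (-((if nrm q then (-1:ℂ) else 1) * (if nrm p then (-1:ℂ) else 1))) • prodF m nrm sg := by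
  have hV : VV m p q = -(DD m p * DD m q) := by
    rw [VV, DD, DD, ee, eperp, mul_assoc]
  rw [hV, neg_mul, mul_assoc, DD_mul_prodF m nrm sg hq1 hqm, mul_smul_comm,
    DD_mul_prodF m nrm sg hp1 hpm, smul_smul, ← neg_smul]

lemma prodF_mul_eperp (m : ℕ) (nrm sg : ℕ → Bool) {p : ℕ} (h1 : 1 ≤ p) (h2 : p ≤ m) :
    prodF m nrm sg * eperp m p =
      ((-1:ℂ)^(bval (sg p) + 1) * oddI p) •
        prodF m nrm (fun s => if p + p % 2 ≤ s then !sg s else sg s) := by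
  set sg' : ℕ → Bool := fun s => if p + p % 2 ≤ s then !sg s else sg s with hsg'
  have hlt : ∀ s, s < p → sg' s = sg s := fun s hs => by
    simp only [hsg']; rw [if_neg (by omega)]
  have hgt : ∀ s, p < s → sg' s = !sg s := fun s hs => by
    simp only [hsg']; rw [if_pos (by omega)]
  rw [prodF_split m nrm sg h1 h2, prodF_split m nrm sg' h1 h2]
  have hA : ((List.range (p-1)).map (fF m nrm sg')).prod
      = ((List.range (p-1)).map (fF m nrm sg)).prod :=
    map_prod_congr _ fun s hs => by
      have := List.mem_range.1 hs
      unfold fF; rw [hlt (s+1) (by omega)]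
  have hT : (((List.range (m-p)).map (p + ·)).map (fF m nrm sg)).prod * eperp m p
      = eperp m p * (((List.range (m-p)).map (p + ·)).map (fF m nrm sg')).prod :=
    list_prod_swap _ fun s hs => by
      obtain ⟨k, hk, rfl⟩ := List.mem_map.1 hs
      have hne : p ≠ p + k + 1 := by omega
      unfold fF
      rw [hgt (p + k + 1) (by omega)]
      have := eperp_idemF_swap m hne (nrm (p+k+1)) (!sg (p+k+1))
      simpa [Bool.not_not] using this.symm
  rw [hA, mul_assoc _ _ (eperp m p), hT, ← mul_assoc,
    mul_assoc _ (idemF m p (nrm p) (sg p)) (eperp m p)]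
  rcases Nat.mod_two_eq_zero_or_one p with hpar | hpar
  · have ho : oddI p = 1 := by simp [oddI, hpar]
    have hpp : sg' p = !sg p := by simp only [hsg']; rw [if_pos (by omega)]
    rw [absorb_even m hpar h1 h2, ho, mul_one, hpp, mul_smul_comm, smul_mul_assoc]
  · have ho : oddI p = Complex.I := by simp [oddI, hpar]
    have hpp : sg' p = sg p := by simp only [hsg']; rw [if_neg (by omega)]
    rw [absorb_odd m hpar h1 h2, ho, hpp, mul_smul_comm, smul_mul_assoc]

lemma main_helper (m : ℕ) (nrm sg : ℕ → Bool) {p q a2 b2 : ℕ}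
    (hp1 : 1 ≤ p) (hpm : p ≤ m) (hq1 : 1 ≤ q) (hqm : q ≤ m)
    (hpa : p + p % 2 = a2) (hqb : q + q % 2 = b2) (haq : a2 ≤ q) (hab : a2 ≤ b2) :
    VV m p q * prodF m nrm sg * eperp m p * eperp m q =
      (-((if nrm q then (-1:ℂ) else 1) * (if nrm p then (-1:ℂ) else 1)) *
        ((-1)^(bval (sg p) + 1) * oddI p) * ((-1)^(bval (!sg q) + 1) * oddI q)) •
        prodF m nrm (fun s => if a2 ≤ s ∧ s ≤ b2 - 1 then !sg s else sg s) := by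
  rw [VV_mul_prodF m nrm sg hp1 hpm hq1 hqm, smul_mul_assoc,
    prodF_mul_eperp m nrm sg hp1 hpm, smul_mul_assoc, smul_mul_assoc]
  have hfun1 : (fun s => if p + p % 2 ≤ s then !sg s else sg s)
      = (fun s => if a2 ≤ s then !sg s else sg s) := by
    funext s; rw [hpa]
  rw [hfun1, prodF_mul_eperp m nrm _ hq1 hqm]
  have hq' : (if a2 ≤ q then !sg q else sg q) = !sg q := if_pos haq
  have hfun2 : (fun s => if q + q % 2 ≤ s then !(if a2 ≤ s then !sg s else sg s)
        else (if a2 ≤ s then !sg s else sg s))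
      = (fun s => if a2 ≤ s ∧ s ≤ b2 - 1 then !sg s else sg s) := by
    funext s; rw [hqb]
    rcases Nat.lt_or_ge s b2 with h1 | h1 <;> rcases Nat.lt_or_ge s a2 with h2 | h2 <;>
      · first
        | (rw [if_neg (by omega), if_neg (by omega), if_neg (by omega)])
        | (rw [if_neg (by omega), if_pos (by omega), if_pos (by omega)])
        | (rw [if_pos (by omega), if_neg (by omega), if_neg (by omega), Bool.not_not]
            <;> omega)
        | (rw [if_pos (by omega), if_pos (by omega), if_neg (by omega), Bool.not_not])
  simp only [hq', hfun2, smul_smul]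
  congr 1
  ring

/-- with `m = 2n`, `n ≥ 2`, `1 ≤ a < b ≤ n`, the odd-odd and even-even
cases of the action `V_{·,·} F e_·^⊥ e_·^⊥`, producing `F^{2a,2b-1}` (the product `F` with
factors in positions `2a, …, 2b-1` replaced by their tilded versions, i.e. `|·|` flipped). -/
theorem V_prodF_eperp_oddodd_eveneven (n : ℕ) (hn : 2 ≤ n) (nrm sg : ℕ → Bool)
    (a b : ℕ) (ha : 1 ≤ a) (hab : a < b) (hb : b ≤ n) :
    VV (2 * n) (2 * a - 1) (2 * b - 1) * prodF (2 * n) nrm sg *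
          eperp (2 * n) (2 * a - 1) * eperp (2 * n) (2 * b - 1) =
        ((-1 : ℂ) ^ (bval (sg (2 * a - 1)) + bval (sg (2 * b - 1)) +
            bval (nrm (2 * a - 1)) + bval (nrm (2 * b - 1)) + 1)) •
          prodF (2 * n) nrm
            (fun s => if 2 * a ≤ s ∧ s ≤ 2 * b - 1 then !sg s else sg s) ∧
      VV (2 * n) (2 * a) (2 * b) * prodF (2 * n) nrm sg *
          eperp (2 * n) (2 * a) * eperp (2 * n) (2 * b) =
        ((-1 : ℂ) ^ (bval (sg (2 * a)) + bval (sg (2 * b)) +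
            bval (nrm (2 * a)) + bval (nrm (2 * b)))) •
          prodF (2 * n) nrm
            (fun s => if 2 * a ≤ s ∧ s ≤ 2 * b - 1 then !sg s else sg s) := by
  constructor
  · have h := main_helper (2*n) nrm sg (p := 2*a-1) (q := 2*b-1) (a2 := 2*a) (b2 := 2*b)
      (by omega) (by omega) (by omega) (by omega) (by omega) (by omega) (by omega) (by omega)
    rw [h]
    congr 1
    rw [show oddI (2*a-1) = Complex.I from by rw [oddI, if_pos (by omega)],
        show oddI (2*b-1) = Complex.I from by rw [oddI, if_pos (by omega)]]
    cases hsp : sg (2*a-1) <;> cases hsq : sg (2*b-1) <;>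
      cases hnp : nrm (2*a-1) <;> cases hnq : nrm (2*b-1) <;>
      simp [bval] <;> ring_nf <;> simp [Complex.I_sq] <;> ring_nf <;> norm_num
  · have h := main_helper (2*n) nrm sg (p := 2*a) (q := 2*b) (a2 := 2*a) (b2 := 2*b)
      (by omega) (by omega) (by omega) (by omega) (by omega) (by omega) (by omega) (by omega)
    rw [h]
    congr 1
    rw [show oddI (2*a) = 1 from by rw [oddI, if_neg (by omega)],
        show oddI (2*b) = 1 from by rw [oddI, if_neg (by omega)]]
    cases hsp : sg (2*a) <;> cases hsq : sg (2*b) <;>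
      cases hnp : nrm (2*a) <;> cases hnq : nrm (2*b) <;>
      simp [bval] <;> ring_nf <;> simp [Complex.I_sq] <;> ring_nf <;> norm_num

end
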